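/- arXiv:2404.13995 — 3 statements merged into one kernel-verified Lean document; each statement's English description precedes it below -/
import Mathlib

section
/- Let f: (0, ∞) → ℝ be continuous, absolutely integrable on (0, ∞), and of bounded variation. Then (π/h)·Σ_{i=1}^{∞} f(iπ/h) converges to ∫₀^∞ f(q) dq as h → ∞. -/
open Real MeasureTheory

lemma cell_union {δ : ℝ} (hδ : 0 < δ) :
    (⋃ k : ℕ, Set.Ioc ((k : ℝ) * δ) (((k : ℝ) + 1) * δ)) = Set.Ioi (0 : ℝ) := by
  ext x
  simp only [Set.mem_iUnion, Set.mem_Ioc, Set.mem_Ioi]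
  constructor
  · rintro ⟨k, hk, -⟩
    have : (0 : ℝ) ≤ (k : ℝ) * δ := by positivity
    linarith
  · intro hx
    have hxδ : 0 < x / δ := div_pos hx hδ
    set n := Nat.ceil (x / δ) with hn
    have hn1 : 1 ≤ n := Nat.one_le_ceil_iff.mpr hxδ
    refine ⟨n - 1, ?_, ?_⟩
    · have h1 : ((n - 1 : ℕ) : ℝ) < x / δ := Nat.lt_ceil.mp (Nat.sub_lt hn1 one_pos)
      calc ((n - 1 : ℕ) : ℝ) * δ < (x / δ) * δ := by
            exact mul_lt_mul_of_pos_right h1 hδ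
        _ = x := div_mul_cancel₀ x hδ.ne'
    · have h2 : x / δ ≤ (n : ℝ) := Nat.le_ceil _
      have hc : ((n - 1 : ℕ) : ℝ) + 1 = (n : ℝ) := by
        have h3 : ((n - 1 : ℕ) : ℝ) = (n : ℝ) - 1 := by
          push_cast [Nat.cast_sub hn1]; ring
        rw [h3]; ring
      rw [hc]
      calc x = (x / δ) * δ := (div_mul_cancel₀ x hδ.ne').symm
        _ ≤ (n : ℝ) * δ := mul_le_mul_of_nonneg_right h2 hδ.le

set_option maxHeartbeats 2000000 in
lemma riemann_key (f : ℝ → ℝ) (hint : IntegrableOn f (Set.Ioi 0))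
    (hbv : BoundedVariationOn f (Set.Ioi 0)) {δ : ℝ} (hδ : 0 < δ) :
    dist (δ * ∑' i : ℕ, f (((i : ℝ) + 1) * δ)) (∫ q in Set.Ioi (0 : ℝ), f q)
      ≤ δ * (eVariationOn f (Set.Ioi 0)).toReal := by
  set cell : ℕ → Set ℝ := fun k => Set.Ioc ((k : ℝ) * δ) (((k : ℝ) + 1) * δ) with hcell
  have hsub : ∀ k, cell k ⊆ Set.Ioi 0 := by
    intro k t ht
    have h0 : (0 : ℝ) ≤ (k : ℝ) * δ := by positivity
    exact lt_of_le_of_lt h0 ht.1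
  have hmeas : ∀ k, MeasurableSet (cell k) := fun k => measurableSet_Ioc
  have hdisj : Pairwise (Function.onFun Disjoint cell) := by
    intro i j hij
    rcases hij.lt_or_gt with h | h
    · apply Set.Ioc_disjoint_Ioc.mpr
      rw [min_le_iff]
      left
      rw [le_max_iff]
      right
      have : (i : ℝ) + 1 ≤ (j : ℝ) := by exact_mod_cast h
      nlinarith
    · apply Set.Ioc_disjoint_Ioc.mpr
      rw [min_le_iff]
      right
      rw [le_max_iff]
      left
      have : (j : ℝ) + 1 ≤ (i : ℝ) := by exact_mod_cast h
      nlinarith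
  have hunion : (⋃ k, cell k) = Set.Ioi (0 : ℝ) := cell_union hδ
  have hintU : IntegrableOn f (⋃ k, cell k) := by rw [hunion]; exact hint
  have hHas : HasSum (fun k => ∫ t in cell k, f t) (∫ q in Set.Ioi (0 : ℝ), f q) := by
    have := hasSum_integral_iUnion hmeas hdisj hintU
    rwa [hunion] at this
  set V : ℕ → ENNReal := fun k => eVariationOn f (cell k) with hV
  have hVk : ∀ k, BoundedVariationOn f (cell k) := fun k => hbv.mono (hsub k)
  have hμ : ∀ k, volume (cell k) = ENNReal.ofReal δ := by
    intro k
    rw [hcell]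
    simp only [Real.volume_Ioc]
    ring_nf
  -- per cell estimate
  have hest : ∀ k : ℕ, |δ * f (((k : ℝ) + 1) * δ) - ∫ t in cell k, f t| ≤ δ * (V k).toReal := by
    intro k
    have hIk : IntegrableOn f (cell k) := hint.mono_set (hsub k)
    have hfin : volume (cell k) < ⊤ := by rw [hμ k]; exact ENNReal.ofReal_lt_top
    have hconstI : IntegrableOn (fun _ => f (((k : ℝ) + 1) * δ)) (cell k) :=
      integrableOn_const hfin.ne
    have hconst : ∫ _t in cell k, f (((k : ℝ) + 1) * δ) = δ * f (((k : ℝ) + 1) * δ) := by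
      rw [setIntegral_const, measureReal_def, hμ k, ENNReal.toReal_ofReal hδ.le, smul_eq_mul]
    have hrw : δ * f (((k : ℝ) + 1) * δ) - ∫ t in cell k, f t
        = ∫ t in cell k, (f (((k : ℝ) + 1) * δ) - f t) := by
      rw [integral_sub hconstI hIk, hconst]
    have hmem : ((k : ℝ) + 1) * δ ∈ cell k := by
      constructor
      · nlinarith
      · exact le_rfl
    have hC : ∀ t ∈ cell k, ‖f (((k : ℝ) + 1) * δ) - f t‖ ≤ (V k).toReal := by
      intro t ht
      have := (hVk k).dist_le hmem ht
      rwa [Real.dist_eq] at this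
    have hmeasf : AEStronglyMeasurable (fun t => f (((k : ℝ) + 1) * δ) - f t)
        (volume.restrict (cell k)) := (hconstI.sub hIk).aestronglyMeasurable
    rw [hrw, ← Real.norm_eq_abs]
    calc ‖∫ t in cell k, (f (((k : ℝ) + 1) * δ) - f t)‖
        ≤ (V k).toReal * (volume (cell k)).toReal :=
          by have := norm_setIntegral_le_of_norm_le_const hfin hC; rwa [measureReal_def] at this
      _ = δ * (V k).toReal := by
          rw [hμ k, ENNReal.toReal_ofReal hδ.le]; ring
  -- variation sum bound
  have hVsum : ∑' k, V k ≤ eVariationOn f (Set.Ioi 0) := by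
    set W : ℕ → ENNReal :=
      fun k => eVariationOn f (Set.Ioi 0 ∩ Set.Icc ((k : ℝ) * δ) (((k : ℝ) + 1) * δ)) with hW
    have hVW : ∀ k, V k ≤ W k := by
      intro k
      apply eVariationOn.mono
      intro t ht
      refine ⟨hsub k ht, ht.1.le, ht.2⟩
    have hclaim : ∀ n : ℕ, 1 ≤ n →
        ∑ k ∈ Finset.range n, W k = eVariationOn f (Set.Ioi 0 ∩ Set.Icc 0 ((n : ℝ) * δ)) := by
      intro n hn
      induction n with
      | zero => omega
      | succ m ih =>
        rcases Nat.eq_or_lt_of_le hn with h1 | h1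
        · rw [← h1]
          simp only [Finset.sum_range_one, hW]
          norm_num
        · have hm : 1 ≤ m := by omega
          rw [Finset.sum_range_succ, ih hm, hW]
          have hb : (m : ℝ) * δ ∈ Set.Ioi (0 : ℝ) := by
            have : (1 : ℝ) ≤ (m : ℝ) := by exact_mod_cast hm
            have : 0 < (m : ℝ) * δ := by nlinarith
            exact this
          have hab : (0 : ℝ) ≤ (m : ℝ) * δ := le_of_lt hb
          have hbc : (m : ℝ) * δ ≤ ((m : ℝ) + 1) * δ := by nlinarith
          rw [eVariationOn.Icc_add_Icc f hab hbc hb]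
          push_cast
          ring_nf
    have hle : ∀ n : ℕ, ∑ k ∈ Finset.range n, W k ≤ eVariationOn f (Set.Ioi 0) := by
      intro n
      rcases Nat.eq_zero_or_pos n with h | h
      · simp [h]
      · rw [hclaim n h]
        exact eVariationOn.mono f Set.inter_subset_left
    calc ∑' k, V k ≤ ∑' k, W k := ENNReal.tsum_le_tsum hVW
      _ ≤ eVariationOn f (Set.Ioi 0) := by
          rw [ENNReal.tsum_eq_iSup_sum]
          apply iSup_le
          intro s
          obtain ⟨n, hs⟩ := s.exists_nat_subset_range
          calc ∑ k ∈ s, W k ≤ ∑ k ∈ Finset.range n, W k :=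
                Finset.sum_le_sum_of_subset hs
            _ ≤ _ := hle n
  have htot : eVariationOn f (Set.Ioi 0) ≠ ⊤ := hbv
  have htop : ∑' k, V k ≠ ⊤ := (lt_of_le_of_lt hVsum (lt_top_iff_ne_top.mpr htot)).ne
  have hVsummable : Summable (fun k => (V k).toReal) := ENNReal.summable_toReal htop
  set d : ℕ → ℝ := fun k => δ * f (((k : ℝ) + 1) * δ) - ∫ t in cell k, f t with hd
  have hdsum : Summable d := by
    apply Summable.of_norm_bounded (hVsummable.mul_left δ)
    intro k
    simpa [Real.norm_eq_abs] using hest k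
  have hsum1 : Summable (fun k : ℕ => δ * f (((k : ℝ) + 1) * δ)) := by
    have h2 := hdsum.add hHas.summable
    have h3 : (fun k => d k + ∫ t in cell k, f t)
        = fun k : ℕ => δ * f (((k : ℝ) + 1) * δ) := by
      funext k; simp [hd]
    rwa [h3] at h2
  have hsf : Summable (fun k : ℕ => f (((k : ℝ) + 1) * δ)) := by
    have h4 := hsum1.mul_left δ⁻¹
    simpa [← mul_assoc, inv_mul_cancel₀ hδ.ne'] using h4
  have hkey : δ * (∑' i : ℕ, f (((i : ℝ) + 1) * δ)) - (∫ q in Set.Ioi (0 : ℝ), f q)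
      = ∑' k, d k := by
    rw [← hHas.tsum_eq, ← tsum_mul_left, ← Summable.tsum_sub hsum1 hHas.summable]
  have hest' : ∀ k : ℕ, ‖d k‖ ≤ δ * (V k).toReal := by
    intro k
    rw [hd, Real.norm_eq_abs]
    exact hest k
  have hdabs : Summable (fun k : ℕ => ‖d k‖) := by
    apply Summable.of_nonneg_of_le (fun k => norm_nonneg _) hest'
    exact hVsummable.mul_left δ
  have h5 : ‖∑' k, d k‖ ≤ ∑' k, ‖d k‖ := norm_tsum_le_tsum_norm hdabs
  have h6 : ∑' k, ‖d k‖ ≤ ∑' k, δ * (V k).toReal :=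
    Summable.tsum_le_tsum hest' hdabs (hVsummable.mul_left δ)
  have h7 : ∑' k : ℕ, δ * (V k).toReal = δ * ∑' k : ℕ, (V k).toReal := tsum_mul_left
  have h8 : ∑' k : ℕ, (V k).toReal ≤ (eVariationOn f (Set.Ioi 0)).toReal := by
    rw [← ENNReal.tsum_toReal_eq (fun k => ((hVk k) : V k ≠ ⊤))]
    exact ENNReal.toReal_mono htot hVsum
  rw [Real.dist_eq, hkey, ← Real.norm_eq_abs]
  have h9 : δ * ∑' k : ℕ, (V k).toReal ≤ δ * (eVariationOn f (Set.Ioi 0)).toReal :=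
    mul_le_mul_of_nonneg_left h8 hδ.le
  linarith

theorem riemann_sum_tendsto_integral (f : ℝ → ℝ)
    (hcont : ContinuousOn f (Set.Ioi 0))
    (hint : IntegrableOn f (Set.Ioi 0))
    (hbv : BoundedVariationOn f (Set.Ioi 0)) :
    Filter.Tendsto (fun h : ℝ => (π / h) * ∑' i : ℕ, f ((i + 1) * π / h))
      Filter.atTop (nhds (∫ q in Set.Ioi (0:ℝ), f q)) := by
  rw [tendsto_iff_dist_tendsto_zero]
  apply squeeze_zero' (Filter.Eventually.of_forall (fun h => dist_nonneg))
  · filter_upwards [Filter.eventually_gt_atTop (0 : ℝ)] with h hh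
    have hδ : 0 < π / h := div_pos Real.pi_pos hh
    have := riemann_key f hint hbv hδ
    calc dist ((π / h) * ∑' i : ℕ, f ((i + 1) * π / h)) (∫ q in Set.Ioi (0:ℝ), f q)
        = dist ((π / h) * ∑' i : ℕ, f (((i : ℝ) + 1) * (π / h))) (∫ q in Set.Ioi (0:ℝ), f q) := by
          congr 2
          apply tsum_congr
          intro i
          rw [mul_div_assoc]
      _ ≤ (π / h) * (eVariationOn f (Set.Ioi 0)).toReal := this
      _ = π * (eVariationOn f (Set.Ioi 0)).toReal / h := by ring
  · exact Filter.Tendsto.div_atTop tendsto_const_nhds Filter.tendsto_id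
end

section
/- Let n be a positive even integer and define the Stehfest weights V_i = (−1)^{i + n/2} · Σ_{k=⌊(i+1)/2⌋}^{min(i, n/2)} k^{n/2}·(2k)! / [ (n/2 − k)!·k!·(k−1)!·(i−k)!·(2k−i)! ] for i = 1, ..., n. Then Σ_{i=1}^{n} V_i = 0 and Σ_{i=1}^{n} V_i / i = 1. -/
open Finset

/-- Casts of factorials are positive. -/
lemma fact_pos_real (t : ℕ) : (0:ℝ) < Nat.factorial t := by
  exact_mod_cast Nat.factorial_pos t

lemma alt_sum_choose_real (k : ℕ) (hk : k ≠ 0) :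
    ∑ j ∈ range (k+1), (-1:ℝ)^j * (k.choose j) = 0 := by
  have h := Int.alternating_sum_range_choose (n := k)
  rw [if_neg hk] at h
  exact_mod_cast h

lemma prod_shift (a : ℕ) : ∀ b : ℕ,
    (Nat.factorial a : ℝ) * ∏ j ∈ range b, ((a:ℝ) + 1 + j) = (Nat.factorial (a + b) : ℝ) := by
  intro b
  induction b with
  | zero => simp
  | succ b ih =>
      rw [prod_range_succ, ← mul_assoc, ih]
      push_cast [← Nat.add_assoc, Nat.factorial_succ]
      ring

lemma prod_pos' (b : ℕ) (x : ℝ) (hx : 0 < x) : 0 < ∏ j ∈ range b, (x + j) :=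
  Finset.prod_pos fun j _ => by positivity

/-- Partial fraction identity: `∑ (-1)^j C(k,j)/(x+j) = k! / ∏ (x+j)`. -/
lemma pf : ∀ k : ℕ, ∀ x : ℝ, 0 < x →
    ∑ j ∈ range (k+1), (-1:ℝ)^j * (k.choose j) / (x + j) =
      (Nat.factorial k : ℝ) / ∏ j ∈ range (k+1), (x + j) := by
  intro k
  induction k with
  | zero => intro x hx; simp
  | succ k ih =>
      intro x hx
      have hx1 : (0:ℝ) < x + 1 := by linarith
      have hP : 0 < ∏ j ∈ range (k+1), (x + j) := prod_pos' _ x hx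
      have hP1 : 0 < ∏ j ∈ range (k+1), ((x+1) + j) := prod_pos' _ (x+1) hx1
      have h := Finset.sum_choose_succ_mul (fun i _ => (-1:ℝ)^i / (x+i)) k
      have hL : ∑ j ∈ range (k+2), (-1:ℝ)^j * ((k+1).choose j) / (x + j) =
          ∑ i ∈ range (k + 2), (((k+1).choose i : ℝ)) * ((-1)^i / (x+i)) :=
        Finset.sum_congr rfl fun j _ => by ring
      have hA : ∑ i ∈ range (k + 1), ((k.choose i : ℝ)) * ((-1)^i / (x+i)) =
          (Nat.factorial k : ℝ) / ∏ j ∈ range (k+1), (x + j) := by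
        rw [← ih x hx]; exact Finset.sum_congr rfl fun j _ => by ring
      have hB : ∑ i ∈ range (k + 1), ((k.choose i : ℝ)) * ((-1)^(i+1) / (x+(i+1:ℕ))) =
          - ((Nat.factorial k : ℝ) / ∏ j ∈ range (k+1), ((x+1) + j)) := by
        rw [← ih (x+1) hx1, ← Finset.sum_neg_distrib]
        refine Finset.sum_congr rfl fun j _ => ?_
        push_cast
        have : x + (↑j + 1) = x + 1 + ↑j := by ring
        rw [this]; ring
      rw [hL, h, hA, hB]
      have hQ1 : ∏ j ∈ range (k+2), (x + j) = (∏ j ∈ range (k+1), (x + j)) * (x + (k+1)) := by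
        rw [prod_range_succ]; push_cast; ring
      have hQ2 : ∏ j ∈ range (k+2), (x + j) = x * ∏ j ∈ range (k+1), ((x+1) + j) := by
        rw [Finset.prod_range_succ']
        have h0 : (x + ((0:ℕ):ℝ)) = x := by norm_num
        rw [h0, mul_comm]
        congr 1
        exact Finset.prod_congr rfl fun j _ => by push_cast; ring
      have hQpos : 0 < ∏ j ∈ range (k+2), (x + j) := prod_pos' _ x hx
      rw [eq_div_iff (ne_of_gt hQpos)]
      have t1 : ((Nat.factorial k : ℝ) / ∏ j ∈ range (k+1), (x + j)) * ∏ j ∈ range (k+2), (x + j)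
          = (Nat.factorial k : ℝ) * (x + (k+1)) := by
        rw [hQ1]; field_simp
      have t2 : ((Nat.factorial k : ℝ) / ∏ j ∈ range (k+1), ((x+1) + j)) * ∏ j ∈ range (k+2), (x + j)
          = (Nat.factorial k : ℝ) * x := by
        rw [hQ2]; field_simp
      rw [add_mul, neg_mul, t1, t2]
      have hfac : ((Nat.factorial (k+1) : ℝ)) = (k+1) * (Nat.factorial k) := by
        push_cast [Nat.factorial_succ]; ring
      rw [hfac]; ring

/-- The `m`-th finite difference of `x^p` at 0. -/
lemma Tm : ∀ m : ℕ, ∀ p : ℕ, p ≤ m →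
    ∑ k ∈ range (m+1), (-1:ℝ)^k * (m.choose k) * (k:ℝ)^p =
      if p = m then (-1:ℝ)^m * (Nat.factorial m) else 0 := by
  intro m
  induction m with
  | zero =>
      intro p hp
      interval_cases p
      simp
  | succ m ih =>
      intro p hp
      match p with
      | 0 =>
          rw [if_neg (by omega)]
          have := alt_sum_choose_real (m+1) (by omega)
          rw [← this]
          exact Finset.sum_congr rfl fun k _ => by simp
      | q+1 =>
          have hq : q ≤ m := by omega
          have peel := Finset.sum_range_succ'
            (fun k => (-1:ℝ)^k * ((m+1).choose k) * (k:ℝ)^(q+1)) (m+1)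
          rw [peel]
          have h0 : (-1:ℝ)^0 * (((m+1).choose 0 : ℕ):ℝ) * ((0:ℕ):ℝ)^(q+1) = 0 := by simp
          rw [h0, add_zero]
          have hterm : ∀ k : ℕ, (-1:ℝ)^(k+1) * (((m+1).choose (k+1) : ℕ):ℝ) * ((k+1:ℕ):ℝ)^(q+1)
              = -((m:ℝ)+1) * ((-1:ℝ)^k * (m.choose k) * ((k:ℝ)+1)^q) := by
            intro k
            have hc : ((m+1) * (m.choose k) : ℕ) = ((m+1).choose (k+1)) * (k+1) :=
              Nat.add_one_mul_choose_eq m k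
            have hc' : ((m:ℝ)+1) * (m.choose k) = (((m+1).choose (k+1) : ℕ):ℝ) * ((k:ℝ)+1) := by
              exact_mod_cast congrArg (Nat.cast : ℕ → ℝ) hc
            push_cast
            linear_combination (-(-1:ℝ)^(k+1) * ((k:ℝ)+1)^q) * hc'
          rw [Finset.sum_congr rfl (fun k _ => hterm k)]
          rw [← Finset.mul_sum]
          have hb : ∀ k : ℕ, ((k:ℝ)+1)^q = ∑ r ∈ range (q+1), (k:ℝ)^r * (q.choose r) := by
            intro k
            have := add_pow (R := ℝ) (k:ℝ) 1 q
            simpa using this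
          have hswap : ∑ k ∈ range (m+1), (-1:ℝ)^k * (m.choose k) * ((k:ℝ)+1)^q
              = ∑ r ∈ range (q+1), (q.choose r : ℝ) *
                  ∑ k ∈ range (m+1), (-1:ℝ)^k * (m.choose k) * (k:ℝ)^r := by
            have : ∀ k ∈ range (m+1), (-1:ℝ)^k * (m.choose k) * ((k:ℝ)+1)^q
                = ∑ r ∈ range (q+1), (q.choose r : ℝ) * ((-1:ℝ)^k * (m.choose k) * (k:ℝ)^r) := by
              intro k _
              rw [hb k, Finset.mul_sum]
              exact Finset.sum_congr rfl fun r _ => by ring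
            rw [Finset.sum_congr rfl this, Finset.sum_comm]
            exact Finset.sum_congr rfl fun r _ => by rw [Finset.mul_sum]
          rw [hswap]
          have hih : ∀ r ∈ range (q+1), (q.choose r : ℝ) *
              (∑ k ∈ range (m+1), (-1:ℝ)^k * (m.choose k) * (k:ℝ)^r)
              = (q.choose r : ℝ) * (if r = m then (-1:ℝ)^m * (Nat.factorial m) else 0) := by
            intro r hr
            rw [ih r (by simp at hr; omega)]
          rw [Finset.sum_congr rfl hih]
          by_cases hqm : q = m
          · subst hqm
            rw [if_pos rfl]
            have : ∑ r ∈ range (q+1), (q.choose r : ℝ) *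
                (if r = q then (-1:ℝ)^q * (Nat.factorial q) else 0)
                = (-1:ℝ)^q * (Nat.factorial q) := by
              rw [Finset.sum_eq_single q]
              · simp
              · intro b _ hb'; rw [if_neg hb', mul_zero]
              · intro h; exact absurd (self_mem_range_succ q) h
            rw [this]
            push_cast [Nat.factorial_succ]
            ring
          · rw [if_neg (by omega)]
            have : ∀ r ∈ range (q+1), (q.choose r : ℝ) *
                (if r = m then (-1:ℝ)^m * (Nat.factorial m) else 0) = 0 := by
              intro r hr
              rw [if_neg (by simp at hr; omega), mul_zero]
            rw [Finset.sum_congr rfl this, Finset.sum_const_zero, mul_zero]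

/-- Stehfest weights for an even number `n` of terms. -/
noncomputable def stehfestV (n i : ℕ) : ℝ :=
  (-1 : ℝ) ^ (i + n / 2) *
    ∑ k ∈ Finset.Icc ((i + 1) / 2) (min i (n / 2)),
      ((k : ℝ) ^ (n / 2) * (Nat.factorial (2 * k)) :) /
        ((Nat.factorial (n / 2 - k) : ℝ) * Nat.factorial k * Nat.factorial (k - 1) *
          Nat.factorial (i - k) * Nat.factorial (2 * k - i))

theorem stehfest_weights_sum (n : ℕ) (hn : 0 < n) (heven : Even n) :
    (∑ i ∈ Finset.Icc 1 n, stehfestV n i = 0) ∧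
    (∑ i ∈ Finset.Icc 1 n, stehfestV n i / i = 1) := by
  obtain ⟨m, hm⟩ := heven
  have hn2 : n / 2 = m := by omega
  have hm1 : 1 ≤ m := by omega
  -- swap the order of summation
  have key : ∀ w : ℕ → ℝ,
      ∑ i ∈ Finset.Icc 1 n, stehfestV n i * w i =
      ∑ k ∈ Finset.Icc 1 m, ∑ j ∈ range (k+1),
        (-1:ℝ)^(k+j+m) *
          (((k:ℝ)^m * (Nat.factorial (2*k))) /
            ((Nat.factorial (m-k) : ℝ) * Nat.factorial k * Nat.factorial (k-1) *
              Nat.factorial j * Nat.factorial (k-j))) * w (k+j) := by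
    intro w
    have step1 : ∀ i, stehfestV n i * w i =
        ∑ k ∈ Finset.Icc ((i+1)/2) (min i m),
          (-1:ℝ)^(i+m) *
            (((k:ℝ)^m * (Nat.factorial (2*k))) /
              ((Nat.factorial (m-k) : ℝ) * Nat.factorial k * Nat.factorial (k-1) *
                Nat.factorial (i-k) * Nat.factorial (2*k-i))) * w i := by
      intro i
      rw [stehfestV, hn2, Finset.mul_sum, Finset.sum_mul]
    rw [Finset.sum_congr rfl fun i _ => step1 i]
    rw [Finset.sum_comm' (t' := Finset.Icc 1 m) (s' := fun k => Finset.Icc k (2*k))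
      (by intro i k; simp only [mem_Icc, le_min_iff]; omega)]
    refine Finset.sum_congr rfl fun k hk => ?_
    rw [← Finset.Ico_add_one_right_eq_Icc, Finset.sum_Ico_eq_sum_range]
    rw [show 2*k+1-k = k+1 by omega]
    refine Finset.sum_congr rfl fun j hj => ?_
    simp only [mem_range] at hj
    rw [show k + j - k = j by omega, show 2*k - (k+j) = k - j by omega]
  -- per-term conversion using binomial coefficients
  have conv : ∀ k j : ℕ, j ≤ k →
      ((k:ℝ)^m * (Nat.factorial (2*k))) /
        ((Nat.factorial (m-k) : ℝ) * Nat.factorial k * Nat.factorial (k-1) *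
          Nat.factorial j * Nat.factorial (k-j)) =
      ((k:ℝ)^m * (Nat.factorial (2*k))) * (k.choose j) /
        ((Nat.factorial (m-k) : ℝ) * Nat.factorial k * Nat.factorial (k-1) *
          Nat.factorial k) := by
    intro k j hjk
    have hch : ((k.choose j : ℕ):ℝ) * (Nat.factorial j) * (Nat.factorial (k-j)) =
        (Nat.factorial k : ℝ) := by
      exact_mod_cast congrArg (Nat.cast : ℕ → ℝ) (Nat.choose_mul_factorial_mul_factorial hjk)
    rw [div_eq_div_iff (by positivity) (by positivity)]
    linear_combination (-(k:ℝ)^m * (Nat.factorial (2*k)) * (Nat.factorial (m-k) : ℝ) *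
      Nat.factorial k * Nat.factorial (k-1)) * hch
  constructor
  · -- first identity
    have h := key (fun _ => 1)
    simp only [mul_one] at h
    rw [h]
    apply Finset.sum_eq_zero
    intro k hk
    simp only [mem_Icc] at hk
    have hk0 : k ≠ 0 := by omega
    have hterm : ∀ j ∈ range (k+1),
        (-1:ℝ)^(k+j+m) *
          (((k:ℝ)^m * (Nat.factorial (2*k))) /
            ((Nat.factorial (m-k) : ℝ) * Nat.factorial k * Nat.factorial (k-1) *
              Nat.factorial j * Nat.factorial (k-j))) =
        ((-1:ℝ)^(k+m) * (((k:ℝ)^m * (Nat.factorial (2*k))) /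
            ((Nat.factorial (m-k) : ℝ) * Nat.factorial k * Nat.factorial (k-1) *
              Nat.factorial k))) * ((-1:ℝ)^j * (k.choose j)) := by
      intro j hj
      simp only [mem_range] at hj
      rw [conv k j (by omega), show k+j+m = (k+m)+j by omega, pow_add]
      ring
    rw [Finset.sum_congr rfl hterm, ← Finset.mul_sum, alt_sum_choose_real k hk0, mul_zero]
  · -- second identity
    have h := key (fun i => ((i:ℝ))⁻¹)
    simp only [div_eq_mul_inv]
    rw [h]
    -- compute each inner sum
    have inner : ∀ k, 1 ≤ k → k ≤ m →
        ∑ j ∈ range (k+1),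
          (-1:ℝ)^(k+j+m) *
            (((k:ℝ)^m * (Nat.factorial (2*k))) /
              ((Nat.factorial (m-k) : ℝ) * Nat.factorial k * Nat.factorial (k-1) *
                Nat.factorial j * Nat.factorial (k-j))) * (((k+j:ℕ):ℝ))⁻¹ =
        (-1:ℝ)^(k+m) * ((k:ℝ)^m / ((Nat.factorial (m-k) : ℝ) * Nat.factorial k)) := by
      intro k hk1 hkm
      have hkpos : (0:ℝ) < (k:ℝ) := by exact_mod_cast hk1
      have hterm : ∀ j ∈ range (k+1),
          (-1:ℝ)^(k+j+m) *
            (((k:ℝ)^m * (Nat.factorial (2*k))) /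
              ((Nat.factorial (m-k) : ℝ) * Nat.factorial k * Nat.factorial (k-1) *
                Nat.factorial j * Nat.factorial (k-j))) * (((k+j:ℕ):ℝ))⁻¹ =
          ((-1:ℝ)^(k+m) * (((k:ℝ)^m * (Nat.factorial (2*k))) /
              ((Nat.factorial (m-k) : ℝ) * Nat.factorial k * Nat.factorial (k-1) *
                Nat.factorial k))) * ((-1:ℝ)^j * (k.choose j) / ((k:ℝ) + j)) := by
        intro j hj
        simp only [mem_range] at hj
        rw [conv k j (by omega), show k+j+m = (k+m)+j by omega, pow_add]
        push_cast
        ring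
      rw [Finset.sum_congr rfl hterm, ← Finset.mul_sum, pf k (k:ℝ) hkpos]
      have hPpos : 0 < ∏ j ∈ range (k+1), ((k:ℝ) + j) := prod_pos' _ _ hkpos
      have hprod : (Nat.factorial (k-1) : ℝ) * ∏ j ∈ range (k+1), ((k:ℝ) + j) =
          (Nat.factorial (2*k) : ℝ) := by
        have hps := prod_shift (k-1) (k+1)
        have hc : ((k-1:ℕ):ℝ) + 1 = (k:ℝ) := by
          rw [Nat.cast_sub hk1]; ring
        have hpc : ∏ j ∈ range (k+1), (((k-1:ℕ):ℝ) + 1 + j) =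
            ∏ j ∈ range (k+1), ((k:ℝ) + j) :=
          Finset.prod_congr rfl fun j _ => by rw [hc]
        rw [hpc] at hps
        rw [hps, show (k-1) + (k+1) = 2*k by omega]
      field_simp
      linear_combination (-1:ℝ) * hprod
    rw [Finset.sum_congr rfl (fun k hk => by
      simp only [mem_Icc] at hk
      exact inner k hk.1 hk.2)]
    -- extend the sum to `range (m+1)`
    have hsub : Finset.Icc 1 m ⊆ range (m+1) := by
      intro k hk; simp only [mem_Icc] at hk; simp only [mem_range]; omega
    rw [Finset.sum_subset hsub (by
      intro k hk hk'
      simp only [mem_range] at hk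
      simp only [mem_Icc] at hk'
      have hk0 : k = 0 := by omega
      subst hk0
      norm_num [zero_pow (show m ≠ 0 by omega)])]
    -- rewrite each term via binomial coefficients
    have hterm : ∀ k ∈ range (m+1),
        (-1:ℝ)^(k+m) * ((k:ℝ)^m / ((Nat.factorial (m-k) : ℝ) * Nat.factorial k)) =
        ((-1:ℝ)^m / (Nat.factorial m : ℝ)) * ((-1:ℝ)^k * (m.choose k) * (k:ℝ)^m) := by
      intro k hk
      simp only [mem_range] at hk
      have hkm : k ≤ m := by omega
      have hch2 : ((m.choose k : ℕ):ℝ) * (Nat.factorial k) * (Nat.factorial (m-k)) =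
          (Nat.factorial m : ℝ) := by
        exact_mod_cast congrArg (Nat.cast : ℕ → ℝ) (Nat.choose_mul_factorial_mul_factorial hkm)
      rw [pow_add]
      field_simp
      linear_combination (-(k:ℝ)^m) * hch2
    rw [Finset.sum_congr rfl hterm, ← Finset.mul_sum, Tm m m le_rfl, if_pos rfl]
    have hsq : (-1:ℝ)^m * (-1)^m = 1 := by
      rw [← pow_add]; exact Even.neg_one_pow ⟨m, rfl⟩
    have hf0 : (Nat.factorial m : ℝ) ≠ 0 := ne_of_gt (fact_pos_real m)
    field_simp
    linear_combination hsq
end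

section
/- Let q > 0, μ > 0, σ > 0 and consider F(s) = R̃(s) for the single-interface reflection coefficient of a conducting half-space in cylindrical coordinates: R̃(s) = [β₂·K₀(a₂b)·K₁(a₁b) − β₁·K₀(a₁b)·K₁(a₂b)] / [β₂·I₀(a₂b)·K₁(a₁b) + β₁·K₀(a₁b)·I₁(a₂b)] with a₁ = √(q² + sμσ), a₂ = q, β₁ = a₁/μ_r, β₂ = a₂. Then every zero s of the denominator with q² + sμσ ≠ 0 satisfies Im(s) = 0 and Re(s) < −q²/(μσ). -/
open Real MeasureTheory

/-- Modified Bessel function of the first kind, order 0, complex argument. -/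
noncomputable def cBesselI0 (z : ℂ) : ℂ :=
  (1 / Real.pi : ℂ) * ∫ θ in (0:ℝ)..Real.pi, Complex.exp (z * Real.cos θ)

/-- Modified Bessel function of the first kind, order 1, complex argument. -/
noncomputable def cBesselI1 (z : ℂ) : ℂ :=
  (1 / Real.pi : ℂ) * ∫ θ in (0:ℝ)..Real.pi, Complex.exp (z * Real.cos θ) * (Real.cos θ : ℂ)

/-- Modified Bessel function of the second kind, order 0, complex argument. -/
noncomputable def cBesselK0 (z : ℂ) : ℂ :=
  ∫ t in Set.Ioi (0:ℝ), Complex.exp (-z * Real.cosh t)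

/-- Modified Bessel function of the second kind, order 1, complex argument. -/
noncomputable def cBesselK1 (z : ℂ) : ℂ :=
  ∫ t in Set.Ioi (0:ℝ), Complex.exp (-z * Real.cosh t) * (Real.cosh t : ℂ)

noncomputable def KK (n : ℕ) (z : ℂ) : ℂ :=
  ∫ t in Set.Ioi (0:ℝ), Complex.exp (-z * Real.cosh t) * (Real.cosh t : ℂ)^n

lemma cosh_lower_aux {t : ℝ} (ht : 0 ≤ t) : 1 + t^2/4 ≤ Real.cosh t := by
  rw [Real.cosh_eq]
  have h1 : 1 + t + t^2/2 ≤ Real.exp t := Real.quadratic_le_exp_of_nonneg ht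
  have h2 : -t + 1 ≤ Real.exp (-t) := Real.add_one_le_exp (-t)
  linarith

lemma cosh_lower (t : ℝ) : 1 + t^2/4 ≤ Real.cosh t := by
  rcases le_or_gt 0 t with h | h
  · exact cosh_lower_aux h
  · have := cosh_lower_aux (neg_nonneg.2 h.le)
    simpa [Real.cosh_neg] using this

lemma cosh_le_exp' {t : ℝ} (ht : 0 ≤ t) : Real.cosh t ≤ Real.exp t := by
  have h := Real.sinh_nonneg_iff.2 ht
  have := Real.cosh_add_sinh t
  linarith

lemma realInt (n : ℕ) {x : ℝ} (hx : 0 < x) :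
    IntegrableOn (fun t => Real.exp (-x * Real.cosh t) * (Real.cosh t)^n) (Set.Ioi 0) := by
  set C : ℝ := Real.exp ((n+1)^2/x) with hC
  apply Integrable.mono' ((exp_neg_integrableOn_Ioi 0 one_pos).const_mul C)
  · exact (Continuous.mul (by fun_prop) (by fun_prop)).aestronglyMeasurable
  · filter_upwards [ae_restrict_mem measurableSet_Ioi] with t ht
    have ht0 : (0:ℝ) ≤ t := le_of_lt ht
    have hc1 : (1:ℝ) ≤ Real.cosh t := Real.one_le_cosh t
    have hub : Real.cosh t ≤ Real.exp t := cosh_le_exp' ht0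
    have hlb : 1 + t^2/4 ≤ Real.cosh t := cosh_lower t
    rw [Real.norm_eq_abs, abs_of_nonneg (by positivity)]
    have h1 : Real.exp (-x * Real.cosh t) * (Real.cosh t)^n
        ≤ Real.exp (-x * (1 + t^2/4)) * (Real.exp t)^n :=
      mul_le_mul (Real.exp_le_exp.2 (by nlinarith)) (pow_le_pow_left₀ (by positivity) hub n)
        (by positivity) (Real.exp_pos _).le
    have key : ((n:ℝ)+1)*t - x*t^2/4 ≤ ((n:ℝ)+1)^2/x := by
      rw [le_div_iff₀ (by positivity)]
      nlinarith [sq_nonneg (((n:ℝ)+1) - x*t/2)]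
    calc Real.exp (-x * Real.cosh t) * (Real.cosh t)^n
        ≤ Real.exp (-x * (1 + t^2/4)) * (Real.exp t)^n := h1
      _ = Real.exp (-x * (1 + t^2/4) + n*t) := by
          rw [← Real.exp_nat_mul, ← Real.exp_add]
      _ ≤ C * Real.exp (-1 * t) := by
          rw [hC, ← Real.exp_add]
          apply Real.exp_le_exp.2
          nlinarith

lemma norm_integrand (z : ℂ) (n : ℕ) (t : ℝ) :
    ‖Complex.exp (-z * Real.cosh t) * (Real.cosh t : ℂ)^n‖
      = Real.exp (-z.re * Real.cosh t) * (Real.cosh t)^n := by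
  rw [norm_mul, Complex.norm_exp, norm_pow, Complex.norm_real,
    Real.norm_eq_abs, abs_of_pos (Real.cosh_pos t)]
  congr 2
  simp [Complex.mul_re]

lemma complexInt {z : ℂ} (hz : 0 < z.re) (n : ℕ) :
    IntegrableOn (fun t => Complex.exp (-z * Real.cosh t) * (Real.cosh t : ℂ)^n) (Set.Ioi 0) := by
  rw [IntegrableOn, ← integrable_norm_iff
    ((by fun_prop : Continuous (fun t : ℝ => Complex.exp (-z * Real.cosh t) * (Real.cosh t : ℂ)^n)).aestronglyMeasurable)]
  refine (realInt n hz).congr_fun (fun t _ => (norm_integrand z n t).symm) measurableSet_Ioi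

lemma KK_hasDerivAt {z : ℂ} (hz : 0 < z.re) (n : ℕ) :
    HasDerivAt (KK n) (-(KK (n+1) z)) z := by
  have hε : 0 < z.re / 2 := by linarith
  have main := hasDerivAt_integral_of_dominated_loc_of_deriv_le (μ := volume.restrict (Set.Ioi 0))
    (F := fun w t => Complex.exp (-w * Real.cosh t) * (Real.cosh t : ℂ)^n)
    (F' := fun w t => -(Complex.exp (-w * Real.cosh t) * (Real.cosh t : ℂ)^(n+1)))
    (x₀ := z) (s := Metric.ball z (z.re/2))
    (bound := fun t => Real.exp (-(z.re/2) * Real.cosh t) * (Real.cosh t)^(n+1)) (Metric.ball_mem_nhds z hε)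
    ?_ ?_ ?_ ?_ ?_ ?_
  · have : (∫ t in Set.Ioi (0:ℝ), -(Complex.exp (-z * Real.cosh t) * (Real.cosh t : ℂ)^(n+1)))
        = -(KK (n+1) z) := by
      rw [integral_neg]; rfl
    rw [this] at main
    exact main.2
  · filter_upwards with w
    exact (Continuous.mul (by fun_prop) (by fun_prop)).aestronglyMeasurable
  · exact complexInt hz n
  · exact ((Continuous.mul (by fun_prop) (by fun_prop)).neg).aestronglyMeasurable
  · filter_upwards [ae_restrict_mem measurableSet_Ioi] with t ht w hw
    have hwre : z.re/2 ≤ w.re := by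
      have : |w.re - z.re| ≤ ‖w - z‖ := by
        simpa [Complex.sub_re] using Complex.abs_re_le_norm (w - z)
      rw [Metric.mem_ball, Complex.dist_eq] at hw
      have := abs_le.1 ((this.trans hw.le))
      linarith
    rw [norm_neg, norm_integrand]
    have h1 : Real.exp (-w.re * Real.cosh t) ≤ Real.exp (-(z.re/2) * Real.cosh t) := by
      apply Real.exp_le_exp.2
      have := Real.cosh_pos t
      nlinarith
    exact mul_le_mul_of_nonneg_right h1 (by positivity)
  · exact realInt (n+1) hε
  · filter_upwards [ae_restrict_mem measurableSet_Ioi] with t ht w hw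
    set c : ℂ := (Real.cosh t : ℂ)
    have h1 : HasDerivAt (fun w : ℂ => -w * c) (-c) w := by
      simpa using ((hasDerivAt_id w).neg.mul_const c)
    have h2 : HasDerivAt (fun w : ℂ => Complex.exp (-w * c)) (Complex.exp (-w * c) * -c) w :=
      h1.cexp
    have h3 := h2.mul_const (c^n)
    refine h3.congr_deriv ?_
    ring

lemma abs_sinh_le_cosh (t : ℝ) : |Real.sinh t| ≤ Real.cosh t := by
  have h1 := Real.cosh_sub_sinh t
  have h2 := Real.cosh_add_sinh t
  have := Real.exp_pos t
  have := Real.exp_pos (-t)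
  rw [abs_le]; constructor <;> linarith

lemma integrable_sinhsq {z : ℂ} (hz : 0 < z.re) :
    IntegrableOn (fun t => (Real.sinh t : ℂ)^2 * Complex.exp (-z * Real.cosh t)) (Set.Ioi 0) := by
  apply Integrable.mono' ((realInt 2 hz).congr_fun (fun t _ => rfl) measurableSet_Ioi)
  · exact (Continuous.mul (by fun_prop) (by fun_prop)).aestronglyMeasurable
  · filter_upwards [ae_restrict_mem measurableSet_Ioi] with t ht
    rw [norm_mul, norm_pow, Complex.norm_real, Real.norm_eq_abs,
      Complex.norm_exp]
    have h1 : |Real.sinh t|^2 ≤ (Real.cosh t)^2 :=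
      pow_le_pow_left₀ (abs_nonneg _) (abs_sinh_le_cosh t) 2
    have h2 : ((-z * Real.cosh t).re) = -z.re * Real.cosh t := by simp [Complex.mul_re]
    rw [h2, mul_comm]
    exact mul_le_mul_of_nonneg_left h1 (Real.exp_pos _).le

lemma KK_two {z : ℂ} (hz : 0 < z.re) : KK 2 z = KK 0 z + z⁻¹ * KK 1 z := by
  have hz0 : z ≠ 0 := fun h => by simp [h] at hz
  set φ : ℝ → ℂ := fun t => -(z⁻¹) * ((Real.sinh t : ℂ) * Complex.exp (-z * Real.cosh t)) with hφ
  set f' : ℝ → ℂ := fun t => (Real.sinh t : ℂ)^2 * Complex.exp (-z * Real.cosh t)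
      - z⁻¹ * ((Real.cosh t : ℂ) * Complex.exp (-z * Real.cosh t)) with hf'
  have hderiv : ∀ t : ℝ, HasDerivAt φ (f' t) t := by
    intro t
    have h1 : HasDerivAt (fun t : ℝ => (Real.sinh t : ℂ)) (Real.cosh t) t :=
      (Real.hasDerivAt_sinh t).ofReal_comp
    have h2 : HasDerivAt (fun t : ℝ => -z * (Real.cosh t : ℂ)) (-z * Real.sinh t) t := by
      simpa using ((Real.hasDerivAt_cosh t).ofReal_comp.const_mul (-z))
    have h3 := (h1.mul h2.cexp).const_mul (-(z⁻¹))
    refine h3.congr_deriv ?_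
    rw [hf']
    field_simp
    ring
  have htend : Filter.Tendsto φ Filter.atTop (nhds 0) := by
    have hg : Filter.Tendsto (fun t : ℝ => ‖z‖⁻¹ * Real.exp (-t))
        Filter.atTop (nhds 0) := by
      simpa using Real.tendsto_exp_neg_atTop_nhds_zero.const_mul ‖z‖⁻¹
    apply squeeze_zero_norm' _ hg
    filter_upwards [Filter.eventually_ge_atTop (max 0 (8/z.re))] with t ht
    have ht0 : (0:ℝ) ≤ t := le_trans (le_max_left _ _) ht
    have ht8 : 8/z.re ≤ t := le_trans (le_max_right _ _) ht
    have hcu : Real.cosh t ≥ 1 + t^2/4 := cosh_lower t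
    have hsu : |Real.sinh t| ≤ Real.exp t := (abs_sinh_le_cosh t).trans (cosh_le_exp' ht0)
    rw [hφ]
    simp only [norm_mul, norm_neg, Complex.norm_real, Real.norm_eq_abs,
      Complex.norm_exp]
    have h2 : ((-z * Real.cosh t).re) = -z.re * Real.cosh t := by simp [Complex.mul_re]
    rw [h2]
    have key : |Real.sinh t| * Real.exp (-z.re * Real.cosh t) ≤ Real.exp (-t) := by
      have h3 : 2*t ≤ z.re * (t^2/4) := by
        rw [div_le_iff₀ hz] at ht8
        nlinarith
      calc |Real.sinh t| * Real.exp (-z.re * Real.cosh t)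
          ≤ Real.exp t * Real.exp (-z.re * (1 + t^2/4)) := by
            apply mul_le_mul hsu (Real.exp_le_exp.2 (by nlinarith)) (Real.exp_pos _).le
              (Real.exp_pos _).le
        _ = Real.exp (t - z.re * (1 + t^2/4)) := by rw [← Real.exp_add]; ring_nf
        _ ≤ Real.exp (-t) := Real.exp_le_exp.2 (by nlinarith)
    simp only [norm_inv]
    exact mul_le_mul_of_nonneg_left key (inv_nonneg.2 (norm_nonneg _))
  have hint : IntegrableOn f' (Set.Ioi 0) := by
    apply Integrable.sub (integrable_sinhsq hz)
    exact ((complexInt hz 1).congr_fun (fun t _ => by push_cast; ring) measurableSet_Ioi).const_mul _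
  have hFTC := integral_Ioi_of_hasDerivAt_of_tendsto
    (f := φ) (f' := f') (a := 0) (hderiv 0).continuousAt.continuousWithinAt
    (fun t _ => hderiv t) hint htend
  have hφ0 : φ 0 = 0 := by simp [hφ]
  rw [hφ0, sub_zero] at hFTC
  have hsplit : ∫ t in Set.Ioi (0:ℝ), f' t
      = (∫ t in Set.Ioi (0:ℝ), (Real.sinh t : ℂ)^2 * Complex.exp (-z * Real.cosh t))
        - z⁻¹ * KK 1 z := by
    rw [hf']
    rw [integral_sub (integrable_sinhsq hz)
      (((complexInt hz 1).congr_fun (fun t _ => by push_cast; ring) measurableSet_Ioi).const_mul _),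
      integral_const_mul]
    congr 2
    rw [KK]
    congr 1
    funext t
    push_cast
    ring
  have hsq : (∫ t in Set.Ioi (0:ℝ), (Real.sinh t : ℂ)^2 * Complex.exp (-z * Real.cosh t))
      = KK 2 z - KK 0 z := by
    rw [KK, KK, ← integral_sub (complexInt hz 2) (complexInt hz 0)]
    congr 1
    ext t
    have : (Real.sinh t : ℂ)^2 = (Real.cosh t : ℂ)^2 - 1 := by
      exact_mod_cast Real.sinh_sq t
    rw [this]
    ring
  rw [hsplit, hsq] at hFTC
  have : KK 2 z - KK 0 z - z⁻¹ * KK 1 z = 0 := hFTC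
  linear_combination this

lemma mul_ofReal_re (w : ℂ) (r : ℝ) : (w * (r:ℂ)).re = w.re * r := by
  simp [Complex.mul_re]

lemma KK_r_hasDerivAt {w : ℂ} (hw : 0 < w.re) (n : ℕ) {r : ℝ} (hr : 0 < r) :
    HasDerivAt (fun r : ℝ => KK n (w * (r:ℂ))) (-(w * KK (n+1) (w * (r:ℂ)))) r := by
  have hre : 0 < (w * (r:ℂ)).re := by rw [mul_ofReal_re]; positivity
  have houter := KK_hasDerivAt hre n
  have hinner : HasDerivAt (fun r : ℝ => w * (r:ℂ)) w r := by
    simpa using (Complex.ofRealCLM.hasDerivAt (x := r)).const_mul w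
  have := houter.scomp r hinner
  exact this.congr_deriv (by simp [smul_eq_mul])

lemma KK_norm_le (n : ℕ) {z : ℂ} {x₀ : ℝ} (h0 : 0 < x₀) (hle : x₀ ≤ z.re) :
    ‖KK n z‖ ≤ Real.exp (x₀ - z.re) *
      ∫ t in Set.Ioi (0:ℝ), Real.exp (-x₀ * Real.cosh t) * (Real.cosh t)^n := by
  have hz : 0 < z.re := lt_of_lt_of_le h0 hle
  rw [KK]
  refine (norm_integral_le_integral_norm _).trans ?_
  rw [← integral_const_mul]
  apply setIntegral_mono_on
  · exact (realInt n hz).congr_fun (fun t _ => (norm_integrand z n t).symm) measurableSet_Ioi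
  · exact (realInt n h0).const_mul _
  · exact measurableSet_Ioi
  · intro t ht
    rw [norm_integrand]
    have hc1 : (1:ℝ) ≤ Real.cosh t := Real.one_le_cosh t
    have h1 : Real.exp (-z.re * Real.cosh t)
        ≤ Real.exp (x₀ - z.re) * Real.exp (-x₀ * Real.cosh t) := by
      rw [← Real.exp_add]
      apply Real.exp_le_exp.2
      nlinarith
    calc Real.exp (-z.re * Real.cosh t) * Real.cosh t ^ n
        ≤ (Real.exp (x₀ - z.re) * Real.exp (-x₀ * Real.cosh t)) * Real.cosh t ^ n :=
          mul_le_mul_of_nonneg_right h1 (by positivity)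
      _ = Real.exp (x₀ - z.re) * (Real.exp (-x₀ * Real.cosh t) * Real.cosh t ^ n) := by ring

lemma exp_bound_r {c r : ℝ} (hc : 0 < c) (hr : 0 ≤ r) :
    r * Real.exp (-(2*c) * r) ≤ (1/c) * Real.exp (-c * r) := by
  have h2 : r ≤ Real.exp (c*r)/c := by
    rw [le_div_iff₀ hc]
    nlinarith [Real.add_one_le_exp (c*r)]
  calc r * Real.exp (-(2*c)*r)
      ≤ (Real.exp (c*r)/c) * Real.exp (-(2*c)*r) :=
        mul_le_mul_of_nonneg_right h2 (Real.exp_pos _).le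
    _ = (1/c) * Real.exp (c*r + -(2*c)*r) := by rw [Real.exp_add]; ring
    _ = (1/c) * Real.exp (-c*r) := by ring_nf

lemma cont_KKr {w : ℂ} (hw : 0 < w.re) (n : ℕ) {b : ℝ} (hb : 0 < b) :
    ContinuousOn (fun r : ℝ => KK n (w * (r:ℂ))) (Set.Ici b) := by
  intro r hr
  have hr0 : 0 < r := lt_of_lt_of_le hb hr
  exact (KK_r_hasDerivAt hw n hr0).continuousAt.continuousWithinAt

lemma integrable_rnormSq {w : ℂ} (hw : 0 < w.re) {b : ℝ} (hb : 0 < b) (n : ℕ) :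
    IntegrableOn (fun r : ℝ => r * Complex.normSq (KK n (w * (r:ℂ)))) (Set.Ioi b) := by
  set x₀ : ℝ := w.re * b with hx₀
  have hx₀p : 0 < x₀ := by positivity
  set J : ℝ := ∫ t in Set.Ioi (0:ℝ), Real.exp (-x₀ * Real.cosh t) * (Real.cosh t)^n with hJ
  have hJnn : 0 ≤ J := by
    rw [hJ]
    apply integral_nonneg
    intro t
    positivity
  set M : ℝ := J^2 * Real.exp (2*x₀) * (1/w.re) with hM
  apply Integrable.mono' ((exp_neg_integrableOn_Ioi b hw).const_mul M)
  · exact ((continuous_id.continuousOn.mul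
      ((Complex.continuous_normSq.comp_continuousOn
        ((cont_KKr hw n hb).mono Set.Ioi_subset_Ici_self)))).aestronglyMeasurable
      measurableSet_Ioi)
  · filter_upwards [ae_restrict_mem measurableSet_Ioi] with r hr
    have hrb : b < r := hr
    have hr0 : 0 < r := lt_trans hb hrb
    have hre : x₀ ≤ (w * (r:ℂ)).re := by
      rw [mul_ofReal_re, hx₀]
      nlinarith
    have hnorm := KK_norm_le n hx₀p hre
    rw [← hJ] at hnorm
    have h1 : Complex.normSq (KK n (w * (r:ℂ))) ≤ (Real.exp (x₀ - (w * (r:ℂ)).re) * J)^2 := by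
      rw [Complex.normSq_eq_norm_sq]
      exact pow_le_pow_left₀ (norm_nonneg _) hnorm 2
    rw [mul_ofReal_re] at h1
    rw [Real.norm_eq_abs,
      abs_of_nonneg (mul_nonneg hr0.le (Complex.normSq_nonneg _))]
    calc r * Complex.normSq (KK n (w * (r:ℂ)))
        ≤ r * (Real.exp (x₀ - w.re * r) * J)^2 :=
          mul_le_mul_of_nonneg_left h1 hr0.le
      _ = (J^2 * Real.exp (2*x₀)) * (r * Real.exp (-(2*w.re) * r)) := by
          rw [mul_pow, ← Real.exp_nat_mul]
          rw [show ((2:ℕ):ℝ) * (x₀ - w.re * r) = 2*x₀ + -(2*w.re)*r by push_cast; ring,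
            Real.exp_add]
          ring
      _ ≤ (J^2 * Real.exp (2*x₀)) * ((1/w.re) * Real.exp (-w.re * r)) :=
          mul_le_mul_of_nonneg_left (exp_bound_r hw hr0.le) (by positivity)
      _ = M * Real.exp (-w.re * r) := by rw [hM]; ring

lemma w_ne_zero {w : ℂ} (hw : 0 < w.re) : w ≠ 0 := by
  intro h; rw [h] at hw; simp at hw

lemma green {w : ℂ} (hw : 0 < w.re) {b : ℝ} (hb : 0 < b) :
    (b:ℂ) * w * KK 1 (w*(b:ℂ)) * (starRingEnd ℂ) (KK 0 (w*(b:ℂ)))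
      = (w * (starRingEnd ℂ) w) *
          ((∫ r in Set.Ioi b, r * Complex.normSq (KK 1 (w*(r:ℂ))) : ℝ) : ℂ)
        + w^2 * ((∫ r in Set.Ioi b, r * Complex.normSq (KK 0 (w*(r:ℂ))) : ℝ) : ℂ) := by
  set F : ℝ → ℂ := fun r => (r:ℂ) * w * KK 1 (w*(r:ℂ)) * (starRingEnd ℂ) (KK 0 (w*(r:ℂ)))
    with hF
  set G : ℝ → ℂ := fun r =>
    -(w^2 * (((r * Complex.normSq (KK 0 (w*(r:ℂ)))) : ℝ) : ℂ)
      + (w * (starRingEnd ℂ) w) * (((r * Complex.normSq (KK 1 (w*(r:ℂ)))) : ℝ) : ℂ)) with hG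
  have hwne := w_ne_zero hw
  have hder : ∀ r : ℝ, 0 < r → HasDerivAt F (G r) r := by
    intro r hr
    have hwr : (w*(r:ℂ)) ≠ 0 := mul_ne_zero hwne (by exact_mod_cast ne_of_gt hr)
    have hwrre : 0 < (w*(r:ℂ)).re := by rw [mul_ofReal_re]; positivity
    have h0 := KK_r_hasDerivAt hw 0 hr
    have h1 := KK_r_hasDerivAt hw 1 hr
    have hrc : HasDerivAt (fun r : ℝ => ((r:ℝ):ℂ)) 1 r := by
      exact Complex.ofRealCLM.hasDerivAt (x := r)
    have hconj : HasDerivAt (fun r : ℝ => (starRingEnd ℂ) (KK 0 (w*(r:ℂ))))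
        ((starRingEnd ℂ) (-(w * KK 1 (w*(r:ℂ))))) r := by
      have := (Complex.conjCLE.hasFDerivAt (x := KK 0 (w*(r:ℂ)))).comp_hasDerivAt r h0
      exact this
    have P1 : HasDerivAt (fun r : ℝ => (r:ℂ) * w) w r := by simpa using hrc.mul_const w
    have P2 := P1.mul h1
    have P3 := P2.mul hconj
    refine P3.congr_deriv ?_
    simp only [Pi.mul_apply]
    have hr' : (r:ℂ) ≠ 0 := by exact_mod_cast hr.ne'
    rw [KK_two hwrre]
    rw [hG]
    push_cast
    rw [show ((Complex.normSq (KK 0 (w*(r:ℂ))) : ℝ) : ℂ)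
        = KK 0 (w*(r:ℂ)) * (starRingEnd ℂ) (KK 0 (w*(r:ℂ))) from (Complex.mul_conj _).symm,
      show ((Complex.normSq (KK 1 (w*(r:ℂ))) : ℝ) : ℂ)
        = KK 1 (w*(r:ℂ)) * (starRingEnd ℂ) (KK 1 (w*(r:ℂ))) from (Complex.mul_conj _).symm]
    simp only [map_neg, map_mul]
    field_simp
    ring
  have i0 := integrable_rnormSq hw hb 0
  have i1 := integrable_rnormSq hw hb 1
  have hGint : IntegrableOn G (Set.Ioi b) := by
    rw [hG]
    exact ((i0.ofReal.const_mul (w^2)).add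
      (i1.ofReal.const_mul (w * (starRingEnd ℂ) w))).neg
  have htend : Filter.Tendsto F Filter.atTop (nhds 0) := by
    set x₀ : ℝ := w.re * b with hx₀
    have hx₀p : 0 < x₀ := by positivity
    set J0 : ℝ := ∫ t in Set.Ioi (0:ℝ), Real.exp (-x₀ * Real.cosh t) * (Real.cosh t)^0 with hJ0
    set J1 : ℝ := ∫ t in Set.Ioi (0:ℝ), Real.exp (-x₀ * Real.cosh t) * (Real.cosh t)^1 with hJ1
    have hJ0nn : 0 ≤ J0 := integral_nonneg (fun t => by positivity)
    have hJ1nn : 0 ≤ J1 := integral_nonneg (fun t => by positivity)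
    set M : ℝ := ‖w‖ * (J0 * J1) * Real.exp (2*x₀) * (1/w.re) with hM
    have hg : Filter.Tendsto (fun r : ℝ => M * Real.exp (-(w.re * r)))
        Filter.atTop (nhds 0) := by
      have h1 : Filter.Tendsto (fun r : ℝ => w.re * r) Filter.atTop Filter.atTop :=
        Filter.Tendsto.const_mul_atTop hw Filter.tendsto_id
      simpa using (Real.tendsto_exp_neg_atTop_nhds_zero.comp h1).const_mul M
    apply squeeze_zero_norm' _ hg
    filter_upwards [Filter.eventually_ge_atTop (max b 0)] with r hr
    have hrb : b ≤ r := le_trans (le_max_left _ _) hr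
    have hr0 : (0:ℝ) ≤ r := le_trans (le_max_right _ _) hr
    have hre : x₀ ≤ (w * (r:ℂ)).re := by
      rw [mul_ofReal_re, hx₀]
      nlinarith
    have hn0 := KK_norm_le 0 hx₀p hre
    have hn1 := KK_norm_le 1 hx₀p hre
    rw [← hJ0] at hn0
    rw [← hJ1] at hn1
    rw [mul_ofReal_re] at hn0 hn1
    have hFnorm : ‖F r‖ = r * (‖w‖ * (‖KK 1 (w*(r:ℂ))‖ * ‖KK 0 (w*(r:ℂ))‖)) := by
      rw [hF]
      simp only [norm_mul, Complex.norm_real, Real.norm_eq_abs,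
        Complex.norm_conj, abs_of_nonneg hr0]
      ring
    rw [hFnorm]
    calc r * (‖w‖ * (‖KK 1 (w*(r:ℂ))‖ * ‖KK 0 (w*(r:ℂ))‖))
        ≤ r * (‖w‖ * ((Real.exp (x₀ - w.re * r) * J1)
            * (Real.exp (x₀ - w.re * r) * J0))) := by
          apply mul_le_mul_of_nonneg_left _ hr0
          apply mul_le_mul_of_nonneg_left _ (norm_nonneg _)
          exact mul_le_mul hn1 hn0 (norm_nonneg _) (by positivity)
      _ = (‖w‖ * (J0 * J1) * Real.exp (2*x₀)) * (r * Real.exp (-(2*w.re) * r)) := by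
          rw [show Real.exp (x₀ - w.re * r) * J1 * (Real.exp (x₀ - w.re * r) * J0)
            = J0 * J1 * (Real.exp (x₀ - w.re * r) * Real.exp (x₀ - w.re * r)) by ring,
            ← Real.exp_add, show x₀ - w.re*r + (x₀ - w.re*r) = 2*x₀ + -(2*w.re)*r by ring,
            Real.exp_add]
          ring
      _ ≤ (‖w‖ * (J0 * J1) * Real.exp (2*x₀)) * ((1/w.re) * Real.exp (-w.re * r)) :=
          mul_le_mul_of_nonneg_left (exp_bound_r hw hr0) (by positivity)
      _ = M * Real.exp (-(w.re * r)) := by rw [hM]; ring_nf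
  have hFTC := integral_Ioi_of_hasDerivAt_of_tendsto
    ((hder b hb).continuousAt.continuousWithinAt)
    (fun r hr => hder r (lt_trans hb hr)) hGint htend
  have j0 : Integrable (fun r : ℝ => ((r * Complex.normSq (KK 0 (w*(r:ℂ))) : ℝ) : ℂ))
      (volume.restrict (Set.Ioi b)) := i0.ofReal
  have j1 : Integrable (fun r : ℝ => ((r * Complex.normSq (KK 1 (w*(r:ℂ))) : ℝ) : ℂ))
      (volume.restrict (Set.Ioi b)) := i1.ofReal
  have e0 : ∫ r in Set.Ioi b, ((r * Complex.normSq (KK 0 (w*(r:ℂ))) : ℝ) : ℂ)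
      = ((∫ r in Set.Ioi b, r * Complex.normSq (KK 0 (w*(r:ℂ))) : ℝ) : ℂ) := integral_ofReal
  have e1 : ∫ r in Set.Ioi b, ((r * Complex.normSq (KK 1 (w*(r:ℂ))) : ℝ) : ℂ)
      = ((∫ r in Set.Ioi b, r * Complex.normSq (KK 1 (w*(r:ℂ))) : ℝ) : ℂ) := integral_ofReal
  have hsplit : ∫ r in Set.Ioi b, G r
      = -((w * (starRingEnd ℂ) w) *
            ((∫ r in Set.Ioi b, r * Complex.normSq (KK 1 (w*(r:ℂ))) : ℝ) : ℂ)
          + w^2 * ((∫ r in Set.Ioi b, r * Complex.normSq (KK 0 (w*(r:ℂ))) : ℝ) : ℂ)) := by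
    rw [hG, integral_neg, integral_add (j0.const_mul (w^2))
        (j1.const_mul (w * (starRingEnd ℂ) w)),
      integral_const_mul, integral_const_mul, e0, e1]
    ring
  rw [hsplit] at hFTC
  have : F b = (w * (starRingEnd ℂ) w) *
            ((∫ r in Set.Ioi b, r * Complex.normSq (KK 1 (w*(r:ℂ))) : ℝ) : ℂ)
          + w^2 * ((∫ r in Set.Ioi b, r * Complex.normSq (KK 0 (w*(r:ℂ))) : ℝ) : ℂ) := by
    linear_combination hFTC
  rw [hF] at this
  exact this

lemma KK0_one_ne : KK 0 1 ≠ 0 := by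
  have h1 : KK 0 1 = ((∫ t in Set.Ioi (0:ℝ), Real.exp (-Real.cosh t) : ℝ) : ℂ) := by
    have e : ∫ t in Set.Ioi (0:ℝ), Complex.exp (-1 * (Real.cosh t:ℂ)) * (Real.cosh t:ℂ)^0
        = ∫ t in Set.Ioi (0:ℝ), ((Real.exp (-Real.cosh t) : ℝ) : ℂ) := by
      apply setIntegral_congr_fun measurableSet_Ioi
      intro t _
      simp only [pow_zero, mul_one]
      rw [show (-1 : ℂ) * (Real.cosh t:ℂ) = ((-Real.cosh t : ℝ) : ℂ) by push_cast; ring,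
        ← Complex.ofReal_exp]
    rw [KK, e]
    exact integral_ofReal
  have h2 : (0:ℝ) < ∫ t in Set.Ioi (0:ℝ), Real.exp (-Real.cosh t) := by
    rw [setIntegral_pos_iff_support_of_nonneg_ae
      (Filter.Eventually.of_forall (fun t => (Real.exp_pos _).le))
      ((realInt 0 one_pos).congr_fun (fun t _ => by simp) measurableSet_Ioi)]
    have : Function.support (fun t : ℝ => Real.exp (-Real.cosh t)) = Set.univ := by
      ext t; simp [Real.exp_ne_zero]
    rw [this, Set.univ_inter]
    simp
  rw [h1]
  exact_mod_cast ne_of_gt h2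

lemma B_pos {w : ℂ} (hw : 0 < w.re) {b : ℝ} (hb : 0 < b) :
    0 < ∫ r in Set.Ioi b, r * Complex.normSq (KK 0 (w*(r:ℂ))) := by
  set f : ℝ → ℝ := fun r => r * Complex.normSq (KK 0 (w*(r:ℂ))) with hf
  have hnn : 0 ≤ᵐ[volume.restrict (Set.Ioi b)] f := by
    filter_upwards [ae_restrict_mem measurableSet_Ioi] with r hr
    have : (0:ℝ) < r := lt_trans hb hr
    exact mul_nonneg this.le (Complex.normSq_nonneg _)
  rcases (integral_nonneg_of_ae hnn).lt_or_eq with h | h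
  · exact h
  exfalso
  have hae : f =ᵐ[volume.restrict (Set.Ioi b)] 0 :=
    (integral_eq_zero_iff_of_nonneg_ae hnn (integrable_rnormSq hw hb 0)).1 h.symm
  have hnull : volume.restrict (Set.Ioi b) {r | f r ≠ 0} = 0 := ae_iff.1 hae
  -- choose a sequence of zeros approaching b
  have hch : ∀ n : ℕ, ∃ r, r ∈ Set.Ioo b (b + 1/(n+1)) ∧ KK 0 (w*(r:ℂ)) = 0 := by
    intro n
    by_contra hcon
    push_neg at hcon
    have hsub : Set.Ioo b (b + 1/(n+1)) ⊆ {r | f r ≠ 0} := by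
      intro r hr
      have hr0 : 0 < r := lt_trans hb hr.1
      have hK := hcon r hr
      simp only [Set.mem_setOf_eq, hf]
      intro habs
      rcases mul_eq_zero.1 habs with h' | h'
      · exact absurd h' (ne_of_gt hr0)
      · exact hK (by simpa [Complex.normSq_eq_zero] using h')
    have h1 : volume.restrict (Set.Ioi b) (Set.Ioo b (b + 1/(n+1))) = 0 :=
      measure_mono_null hsub hnull
    rw [Measure.restrict_apply' measurableSet_Ioi] at h1
    have h2 : Set.Ioo b (b + 1/(n+1)) ∩ Set.Ioi b = Set.Ioo b (b + 1/(n+1)) := by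
      apply Set.inter_eq_self_of_subset_left
      intro r hr; exact hr.1
    rw [h2, Real.volume_Ioo] at h1
    have : b < b + 1/(n+1) := by
      have : (0:ℝ) < 1/(n+1) := by positivity
      linarith
    simp [ENNReal.ofReal_eq_zero] at h1
    linarith
  choose rs hrs using hch
  have hrs1 : ∀ n, b < rs n := fun n => (hrs n).1.1
  have hrs2 : ∀ n, rs n < b + 1/(n+1) := fun n => (hrs n).1.2
  have htendr : Filter.Tendsto rs Filter.atTop (nhds b) := by
    have hup : Filter.Tendsto (fun n : ℕ => b + 1/(n+1 : ℝ)) Filter.atTop (nhds b) := by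
      have : Filter.Tendsto (fun n : ℕ => 1/((n:ℝ)+1)) Filter.atTop (nhds 0) :=
        tendsto_one_div_add_atTop_nhds_zero_nat
      simpa using (tendsto_const_nhds (x := b)).add this
    exact tendsto_of_tendsto_of_tendsto_of_le_of_le tendsto_const_nhds hup
      (fun n => (hrs1 n).le) (fun n => (hrs2 n).le)
  have hwne := w_ne_zero hw
  have htendz : Filter.Tendsto (fun n => w * (rs n : ℂ)) Filter.atTop
      (nhdsWithin (w * (b:ℂ)) {z | z ≠ w * (b:ℂ)}) := by
    apply tendsto_nhdsWithin_of_tendsto_nhds_of_eventually_within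
    · have : Filter.Tendsto (fun n => ((rs n : ℝ) : ℂ)) Filter.atTop (nhds (b:ℂ)) :=
        (Complex.continuous_ofReal.tendsto b).comp htendr
      simpa using this.const_mul w
    · apply Filter.Eventually.of_forall
      intro n
      simp only [Set.mem_setOf_eq]
      intro habs
      have : rs n = b := by exact_mod_cast mul_left_cancel₀ hwne habs
      exact (ne_of_gt (hrs1 n)) this
  have hfreq : ∃ᶠ z in nhdsWithin (w * (b:ℂ)) {z | z ≠ w * (b:ℂ)}, KK 0 z = 0 :=
    htendz.frequently (Filter.Eventually.of_forall (fun n => (hrs n).2)).frequently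
  -- identity theorem
  set U : Set ℂ := {z | 0 < z.re} with hU
  have hopen : IsOpen U := isOpen_lt continuous_const Complex.continuous_re
  have hconv : Convex ℝ U := convex_halfSpace_re_gt 0
  have hdiff : DifferentiableOn ℂ (KK 0) U := fun z hz =>
    (KK_hasDerivAt hz 0).differentiableAt.differentiableWithinAt
  have hanal : AnalyticOnNhd ℂ (KK 0) U := hdiff.analyticOnNhd hopen
  have hmem : w * (b:ℂ) ∈ U := by
    simp only [hU, Set.mem_setOf_eq, mul_ofReal_re]
    positivity
  have hzero := hanal.eqOn_zero_of_preconnected_of_frequently_eq_zero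
    hconv.isPreconnected hmem hfreq
  have h1 : (1:ℂ) ∈ U := by simp [hU]
  exact KK0_one_ne (hzero h1)

lemma I0_pos {a : ℝ} (ha : 0 < a) :
    ∃ v : ℝ, 0 < v ∧ cBesselI0 ((a:ℝ):ℂ) = (v:ℂ) := by
  refine ⟨(1/Real.pi) * ∫ θ in (0:ℝ)..Real.pi, Real.exp (a * Real.cos θ), ?_, ?_⟩
  · have hpi := Real.pi_pos
    have hint : 0 < ∫ θ in (0:ℝ)..Real.pi, Real.exp (a * Real.cos θ) := by
      apply intervalIntegral.intervalIntegral_pos_of_pos_on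
      · exact (Continuous.intervalIntegrable (by fun_prop) _ _)
      · intro x _; exact Real.exp_pos _
      · exact hpi
    positivity
  · rw [cBesselI0]
    have e : ∫ θ in (0:ℝ)..Real.pi, Complex.exp ((a:ℂ) * Real.cos θ)
        = ∫ θ in (0:ℝ)..Real.pi, ((Real.exp (a * Real.cos θ) : ℝ) : ℂ) := by
      apply intervalIntegral.integral_congr
      intro θ _
      show Complex.exp ((a:ℂ) * (Real.cos θ : ℂ)) = _
      rw [show ((a:ℝ):ℂ) * (Real.cos θ : ℂ) = ((a * Real.cos θ : ℝ) : ℂ) by push_cast; ring,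
        ← Complex.ofReal_exp]
    rw [e, intervalIntegral.integral_ofReal]
    push_cast
    ring

lemma I1_pos {a : ℝ} (ha : 0 < a) :
    ∃ v : ℝ, 0 < v ∧ cBesselI1 ((a:ℝ):ℂ) = (v:ℂ) := by
  have hpi := Real.pi_pos
  set f : ℝ → ℝ := fun θ => Real.exp (a * Real.cos θ) * Real.cos θ with hfdef
  have hfc : Continuous f := by fun_prop
  refine ⟨(1/Real.pi) * ∫ θ in (0:ℝ)..Real.pi, f θ, ?_, ?_⟩
  · have hsplit : ∫ θ in (0:ℝ)..Real.pi, f θ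
        = (∫ θ in (0:ℝ)..(Real.pi/2), f θ) + ∫ θ in (Real.pi/2)..Real.pi, f θ :=
      (intervalIntegral.integral_add_adjacent_intervals
        (hfc.intervalIntegrable _ _) (hfc.intervalIntegrable _ _)).symm
    have hsub : ∫ θ in (Real.pi/2)..Real.pi, f θ
        = ∫ u in (0:ℝ)..(Real.pi/2), f (Real.pi - u) := by
      rw [intervalIntegral.integral_comp_sub_left f Real.pi, sub_zero, sub_half]
    have hcomb : (∫ θ in (0:ℝ)..(Real.pi/2), f θ) + ∫ u in (0:ℝ)..(Real.pi/2), f (Real.pi - u)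
        = ∫ u in (0:ℝ)..(Real.pi/2), (f u + f (Real.pi - u)) :=
      (intervalIntegral.integral_add (hfc.intervalIntegrable _ _)
        ((hfc.comp (by fun_prop)).intervalIntegrable _ _)).symm
    have hpos : 0 < ∫ u in (0:ℝ)..(Real.pi/2), (f u + f (Real.pi - u)) := by
      apply intervalIntegral.intervalIntegral_pos_of_pos_on
      · exact ((hfc.add (hfc.comp (by fun_prop))).intervalIntegrable _ _)
      · intro x hx
        have hcos : 0 < Real.cos x :=
          Real.cos_pos_of_mem_Ioo ⟨by linarith [hx.1], hx.2⟩
        have : f x + f (Real.pi - x)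
            = (Real.exp (a * Real.cos x) - Real.exp (-(a * Real.cos x))) * Real.cos x := by
          rw [hfdef]
          simp only [Real.cos_pi_sub]
          ring_nf
        rw [this]
        apply mul_pos _ hcos
        have : -(a * Real.cos x) < a * Real.cos x := by nlinarith
        have := Real.exp_lt_exp.2 this
        linarith
      · linarith
    rw [hsplit, hsub, hcomb]
    positivity
  · rw [cBesselI1]
    have e : ∫ θ in (0:ℝ)..Real.pi, Complex.exp ((a:ℂ) * Real.cos θ) * (Real.cos θ : ℂ)
        = ∫ θ in (0:ℝ)..Real.pi, ((f θ : ℝ) : ℂ) := by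
      apply intervalIntegral.integral_congr
      intro θ _
      show Complex.exp ((a:ℂ) * (Real.cos θ : ℂ)) * (Real.cos θ : ℂ) = _
      rw [show ((a:ℝ):ℂ) * (Real.cos θ : ℂ) = ((a * Real.cos θ : ℝ) : ℂ) by push_cast; ring,
        ← Complex.ofReal_exp, hfdef]
      push_cast
      ring
    rw [e, intervalIntegral.integral_ofReal]
    push_cast
    ring

lemma denom_ne_zero {w : ℂ} (hw : 0 < w.re) {q b μr : ℝ} (hq : 0 < q) (hb : 0 < b)
    (hμr : 0 < μr) :
    (q:ℂ) * cBesselI0 ((q:ℂ) * (b:ℂ)) * cBesselK1 (w * (b:ℂ)) +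
      (w / (μr:ℂ)) * cBesselK0 (w * (b:ℂ)) * cBesselI1 ((q:ℂ) * (b:ℂ)) ≠ 0 := by
  intro hzero
  have hK0 : cBesselK0 (w * (b:ℂ)) = KK 0 (w * (b:ℂ)) := by
    rw [cBesselK0, KK]
    apply setIntegral_congr_fun measurableSet_Ioi
    intro t _
    simp
  have hK1 : cBesselK1 (w * (b:ℂ)) = KK 1 (w * (b:ℂ)) := by
    rw [cBesselK1, KK]
    apply setIntegral_congr_fun measurableSet_Ioi
    intro t _
    simp
  obtain ⟨i0, hi0pos, hi0⟩ := I0_pos (mul_pos hq hb)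
  obtain ⟨i1, hi1pos, hi1⟩ := I1_pos (mul_pos hq hb)
  rw [Complex.ofReal_mul] at hi0 hi1
  set C0 := KK 0 (w * (b:ℂ)) with hC0
  set C1 := KK 1 (w * (b:ℂ)) with hC1
  rw [hK0, hK1, hi0, hi1] at hzero
  have hμrne : (μr:ℂ) ≠ 0 := by exact_mod_cast ne_of_gt hμr
  have hzero2 : (q:ℂ) * (i0:ℂ) * C1 * (μr:ℂ) + w * C0 * (i1:ℂ) = 0 := by
    field_simp at hzero
    linear_combination hzero
  set A := ∫ r in Set.Ioi b, r * Complex.normSq (KK 1 (w*(r:ℂ))) with hA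
  set B := ∫ r in Set.Ioi b, r * Complex.normSq (KK 0 (w*(r:ℂ))) with hB
  have hAnn : 0 ≤ A := by
    apply integral_nonneg_of_ae
    filter_upwards [ae_restrict_mem measurableSet_Ioi] with r hr
    exact mul_nonneg (le_of_lt (lt_trans hb hr)) (Complex.normSq_nonneg _)
  have hBpos : 0 < B := B_pos hw hb
  have hgreen := green hw hb
  rw [← hA, ← hB, ← hC0, ← hC1] at hgreen
  set P : ℝ := q * μr * i0 * A with hP
  set Q : ℝ := q * μr * i0 * B + b * Complex.normSq C0 * i1 with hQ
  have hPnn : 0 ≤ P := by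
    rw [hP]; positivity
  have hQpos : 0 < Q := by
    rw [hQ]
    have : 0 < q * μr * i0 * B := by positivity
    nlinarith [Complex.normSq_nonneg C0, mul_nonneg (mul_nonneg hb.le
      (Complex.normSq_nonneg C0)) hi1pos.le]
  have heq : ((Complex.normSq w : ℝ) : ℂ) * (P:ℂ) + w^2 * (Q:ℂ) = 0 := by
    rw [hP, hQ]
    push_cast
    rw [show ((Complex.normSq w : ℝ):ℂ) = w * (starRingEnd ℂ) w from (Complex.mul_conj _).symm,
      show ((Complex.normSq C0 : ℝ):ℂ) = C0 * (starRingEnd ℂ) C0 from (Complex.mul_conj _).symm]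
    linear_combination (-(q:ℂ)*(μr:ℂ)*(i0:ℂ)) * hgreen
      + ((b:ℂ) * w * (starRingEnd ℂ) C0) * hzero2
  have him := congrArg Complex.im heq
  have hre := congrArg Complex.re heq
  simp only [Complex.add_im, Complex.add_re, Complex.mul_im, Complex.mul_re, pow_two,
    Complex.ofReal_re, Complex.ofReal_im, Complex.zero_im, Complex.zero_re,
    mul_zero, zero_mul, add_zero, zero_add, sub_zero] at him hre
  have hwim : w.im = 0 := by
    have h2 : (w.re * w.im + w.im * w.re) * Q = 0 := by linarith
    have := mul_eq_zero.1 h2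
    rcases this with h | h
    · nlinarith
    · exact absurd h (ne_of_gt hQpos)
  have hfin : Complex.normSq w * P + w.re * w.re * Q = 0 := by
    rw [hwim] at hre
    linarith
  have : 0 < w.re * w.re * Q := by positivity
  nlinarith [mul_nonneg (Complex.normSq_nonneg w) hPnn]

theorem reflection_poles_real_negative
    (q μ σ b μr : ℝ) (hq : 0 < q) (hμ : 0 < μ) (hσ : 0 < σ) (hb : 0 < b) (hμr : 0 < μr)
    (s : ℂ) (hrad : (q : ℂ) ^ 2 + s * μ * σ ≠ 0)
    (hzero :
      (q : ℂ) * cBesselI0 ((q : ℂ) * b) *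
          cBesselK1 ((((q : ℂ) ^ 2 + s * μ * σ) ^ (1 / 2 : ℂ)) * b) +
        ((((q : ℂ) ^ 2 + s * μ * σ) ^ (1 / 2 : ℂ)) / μr) *
          cBesselK0 ((((q : ℂ) ^ 2 + s * μ * σ) ^ (1 / 2 : ℂ)) * b) *
          cBesselI1 ((q : ℂ) * b) = 0) :
    s.im = 0 ∧ s.re < -q ^ 2 / (μ * σ) := by
  set z : ℂ := (q : ℂ) ^ 2 + s * μ * σ with hz
  by_cases harg : z.arg = Real.pi
  · obtain ⟨hre, him⟩ := Complex.arg_eq_pi_iff.1 harg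
    have hzim : z.im = s.im * (μ * σ) := by
      rw [hz]
      simp [Complex.add_im, Complex.mul_im, Complex.ofReal_im, Complex.ofReal_re, pow_two,
        Complex.mul_re]
      ring
    have hzre : z.re = q^2 + s.re * (μ * σ) := by
      rw [hz]
      simp [Complex.add_re, Complex.mul_re, Complex.ofReal_im, Complex.ofReal_re, pow_two,
        Complex.mul_im]
      ring
    have hμσ : 0 < μ * σ := mul_pos hμ hσ
    have hsim : s.im = 0 := by
      rw [hzim] at him
      rcases mul_eq_zero.1 him with h | h
      · exact h
      · exact absurd h (ne_of_gt hμσ)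
    refine ⟨hsim, ?_⟩
    rw [hzre] at hre
    rw [lt_div_iff₀ hμσ]
    nlinarith
  · exfalso
    have hwre : 0 < (z ^ (1/2 : ℂ)).re := by
      rw [Complex.cpow_def_of_ne_zero hrad]
      rw [Complex.exp_re]
      apply mul_pos (Real.exp_pos _)
      have h1 : (Complex.log z * (1/2 : ℂ)).im = z.arg / 2 := by
        rw [Complex.mul_im]
        simp [Complex.log_im]
        ring
      rw [h1]
      have h2 : -Real.pi < z.arg := Complex.neg_pi_lt_arg z
      have h3 : z.arg ≤ Real.pi := Complex.arg_le_pi z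
      have h4 : z.arg < Real.pi := lt_of_le_of_ne h3 harg
      have hpi := Real.pi_pos
      apply Real.cos_pos_of_mem_Ioo
      constructor <;> [linarith; linarith]
    exact denom_ne_zero hwre hq hb hμr hzero
end
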